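/- E ‖ (1/N) Σ_{n=1}^N r_n ‖⁴ ≤ 3σ⁴/N². (This is the paper's Appendix A.4 variance-reduction result for fourth-order central moments of mini-batch averages.) -/

import Mathlib

open MeasureTheory ProbabilityTheory

section aux

variable {M N : ℕ} {Ω : Type*} [MeasurableSpace Ω] {P : Measure Ω} [IsProbabilityMeasure P]
  {r : Fin N → Ω → EuclideanSpace ℝ (Fin M)}

lemma vr_amgm4 (a b c d : ℝ) (ha : 0 ≤ a) (hb : 0 ≤ b) (hc : 0 ≤ c) (hd : 0 ≤ d) :
    a*b*c*d ≤ (a^4+b^4+c^4+d^4)/4 := by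
  nlinarith [sq_nonneg (a*b - c*d), sq_nonneg (a^2-b^2), sq_nonneg (c^2-d^2),
    mul_nonneg ha hb, mul_nonneg hc hd, sq_nonneg (a-b), sq_nonneg (c-d),
    mul_nonneg (mul_nonneg ha hb) hc]

set_option maxHeartbeats 1000000 in
lemma vr_lone {α : Type*} (i j k l : α)
    (h1 : ¬(i=j∧k=l)) (h2 : ¬(i=k∧j=l)) (h3 : ¬(i=l∧j=k)) :
    (i≠j∧i≠k∧i≠l) ∨ (j≠i∧j≠k∧j≠l) ∨ (k≠i∧k≠j∧k≠l) ∨ (l≠i∧l≠j∧l≠k) := by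
  by_cases hij : i = j <;> by_cases hik : i = k <;> by_cases hil : i = l <;>
    by_cases hjk : j = k <;> by_cases hjl : j = l <;> by_cases hkl : k = l <;>
    (try simp_all) <;> aesop

lemma vr_coord_le (x : EuclideanSpace ℝ (Fin M)) (m : Fin M) : |x m| ≤ ‖x‖ := by
  rw [EuclideanSpace.norm_eq, ← Real.sqrt_sq_eq_abs]
  refine Real.sqrt_le_sqrt ?_
  have := Finset.single_le_sum (f := fun i => ‖x i‖ ^ 2)
    (fun i _ => sq_nonneg _) (Finset.mem_univ m)
  simpa [Real.norm_eq_abs, sq_abs] using this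

lemma vr_bound_pt (i j k l : Fin N) (ω : Ω) :
    |(inner ℝ (r i ω) (r j ω) : ℝ) * inner ℝ (r k ω) (r l ω)|
      ≤ (‖r i ω‖^4 + ‖r j ω‖^4 + ‖r k ω‖^4 + ‖r l ω‖^4)/4 := by
  calc |(inner ℝ (r i ω) (r j ω) : ℝ) * inner ℝ (r k ω) (r l ω)|
      = |(inner ℝ (r i ω) (r j ω) : ℝ)| * |(inner ℝ (r k ω) (r l ω) : ℝ)| := abs_mul _ _
    _ ≤ (‖r i ω‖ * ‖r j ω‖) * (‖r k ω‖ * ‖r l ω‖) :=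
        mul_le_mul (abs_real_inner_le_norm _ _) (abs_real_inner_le_norm _ _)
          (abs_nonneg _) (by positivity)
    _ = ‖r i ω‖ * ‖r j ω‖ * ‖r k ω‖ * ‖r l ω‖ := by ring
    _ ≤ _ := vr_amgm4 _ _ _ _ (norm_nonneg _) (norm_nonneg _) (norm_nonneg _) (norm_nonneg _)

lemma vr_int_bound (hint4 : ∀ n, Integrable (fun ω => ‖r n ω‖ ^ 4) P) (i j k l : Fin N) :
    Integrable (fun ω => (‖r i ω‖^4 + ‖r j ω‖^4 + ‖r k ω‖^4 + ‖r l ω‖^4)/4) P :=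
  ((((hint4 i).add (hint4 j)).add (hint4 k)).add (hint4 l)).div_const 4

lemma vr_integrable_T (hmeas : ∀ n, Measurable (r n))
    (hint4 : ∀ n, Integrable (fun ω => ‖r n ω‖ ^ 4) P) (i j k l : Fin N) :
    Integrable (fun ω => (inner ℝ (r i ω) (r j ω) : ℝ) * inner ℝ (r k ω) (r l ω)) P := by
  refine (vr_int_bound hint4 i j k l).mono'
    (((hmeas i).inner (hmeas j)).mul ((hmeas k).inner (hmeas l))).aestronglyMeasurable
    (ae_of_all _ fun ω => ?_)
  rw [Real.norm_eq_abs]; exact vr_bound_pt i j k l ω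

lemma vr_integrable_coord (hmeas : ∀ n, Measurable (r n))
    (hint4 : ∀ n, Integrable (fun ω => ‖r n ω‖ ^ 4) P) (i j k l : Fin N) (m : Fin M) :
    Integrable (fun ω => r i ω m * (r j ω m * (inner ℝ (r k ω) (r l ω) : ℝ))) P := by
  refine (vr_int_bound hint4 i j k l).mono'
    ((((measurable_pi_apply m).comp ((WithLp.measurable_ofLp _ _).comp (hmeas i))).mul
      (((measurable_pi_apply m).comp ((WithLp.measurable_ofLp _ _).comp (hmeas j))).mul
        ((hmeas k).inner (hmeas l)))).aestronglyMeasurable)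
    (ae_of_all _ fun ω => ?_)
  have h1 : |r i ω m| ≤ ‖r i ω‖ := vr_coord_le _ _
  have h2 : |r j ω m| ≤ ‖r j ω‖ := vr_coord_le _ _
  have h3 : |(inner ℝ (r k ω) (r l ω) : ℝ)| ≤ ‖r k ω‖ * ‖r l ω‖ := abs_real_inner_le_norm _ _
  calc ‖r i ω m * (r j ω m * (inner ℝ (r k ω) (r l ω) : ℝ))‖
      = |r i ω m| * (|r j ω m| * |(inner ℝ (r k ω) (r l ω) : ℝ)|) := by
        simp [Real.norm_eq_abs, abs_mul]
    _ ≤ ‖r i ω‖ * (‖r j ω‖ * (‖r k ω‖ * ‖r l ω‖)) := by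
        refine mul_le_mul h1 (mul_le_mul h2 h3 (abs_nonneg _) (norm_nonneg _))
          (by positivity) (norm_nonneg _)
    _ = ‖r i ω‖ * ‖r j ω‖ * ‖r k ω‖ * ‖r l ω‖ := by ring
    _ ≤ _ := vr_amgm4 _ _ _ _ (norm_nonneg _) (norm_nonneg _) (norm_nonneg _) (norm_nonneg _)

lemma vr_coord_integral_zero (hint1 : ∀ n, Integrable (r n) P)
    (hmean : ∀ n, ∫ ω, r n ω ∂P = 0) (i : Fin N) (m : Fin M) :
    ∫ ω, r i ω m ∂P = 0 := by
  have h := (EuclideanSpace.proj (𝕜 := ℝ) m).integral_comp_comm (hint1 i)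
  simpa [hmean i] using h

lemma vr_vanish (hmeas : ∀ n, Measurable (r n))
    (hindep : iIndepFun r P)
    (hint1 : ∀ n, Integrable (r n) P)
    (hint4 : ∀ n, Integrable (fun ω => ‖r n ω‖ ^ 4) P)
    (hmean : ∀ n, ∫ ω, r n ω ∂P = 0)
    (i j k l : Fin N) (hij : i ≠ j) (hik : i ≠ k) (hil : i ≠ l) :
    ∫ ω, (inner ℝ (r i ω) (r j ω) : ℝ) * inner ℝ (r k ω) (r l ω) ∂P = 0 := by
  classical
  have hrw : ∀ ω : Ω, (inner ℝ (r i ω) (r j ω) : ℝ) * inner ℝ (r k ω) (r l ω)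
      = ∑ m : Fin M, r i ω m * (r j ω m * (inner ℝ (r k ω) (r l ω) : ℝ)) := by
    intro ω
    rw [PiLp.inner_apply (𝕜 := ℝ) (x := r i ω) (y := r j ω)]
    simp [RCLike.inner_apply, Finset.sum_mul, mul_assoc]
    exact Finset.sum_congr rfl fun x _ => mul_left_comm _ _ _
  simp_rw [hrw]
  rw [integral_finset_sum _ (fun m _ => vr_integrable_coord hmeas hint4 i j k l m)]
  refine Finset.sum_eq_zero fun m _ => ?_
  have hdisj : Disjoint ({i} : Finset (Fin N)) ({j, k, l} : Finset (Fin N)) := by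
    simp [Finset.disjoint_left, hij, hik, hil]
  have hbase := hindep.indepFun_finset {i} {j, k, l} hdisj hmeas
  have hjm : j ∈ ({j, k, l} : Finset (Fin N)) := by simp
  have hkm : k ∈ ({j, k, l} : Finset (Fin N)) := by simp
  have hlm : l ∈ ({j, k, l} : Finset (Fin N)) := by simp
  have him : i ∈ ({i} : Finset (Fin N)) := by simp
  set φ : (∀ _ : ({i} : Finset (Fin N)), EuclideanSpace ℝ (Fin M)) → ℝ :=
    fun v => v ⟨i, him⟩ m with hφ
  set ψ : (∀ _ : ({j, k, l} : Finset (Fin N)), EuclideanSpace ℝ (Fin M)) → ℝ :=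
    fun v => v ⟨j, hjm⟩ m * (inner ℝ (v ⟨k, hkm⟩) (v ⟨l, hlm⟩) : ℝ) with hψ
  have hφm : Measurable φ := (measurable_pi_apply m).comp ((WithLp.measurable_ofLp _ _).comp (measurable_pi_apply _))
  have hψm : Measurable ψ :=
    Measurable.mul
      (f := fun v : (∀ _ : ({j, k, l} : Finset (Fin N)), EuclideanSpace ℝ (Fin M)) => v ⟨j, hjm⟩ m)
      ((measurable_pi_apply m).comp ((WithLp.measurable_ofLp _ _).comp
      (measurable_pi_apply (⟨j, hjm⟩ : ({j, k, l} : Finset (Fin N))))))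
      ((measurable_pi_apply _).inner (measurable_pi_apply _))
  have hXY : IndepFun (fun ω => r i ω m)
      (fun ω => r j ω m * (inner ℝ (r k ω) (r l ω) : ℝ)) P := hbase.comp hφm hψm
  have hX : Integrable (fun ω => r i ω m) P := by
    refine (hint1 i).norm.mono' ?_ (ae_of_all _ fun ω => ?_)
    · exact ((measurable_pi_apply m).comp ((WithLp.measurable_ofLp _ _).comp (hmeas i))).aestronglyMeasurable
    · rw [Real.norm_eq_abs]; exact vr_coord_le _ _
  have hY : Integrable (fun ω => r j ω m * (inner ℝ (r k ω) (r l ω) : ℝ)) P := by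
    refine (((((hint4 j).add (hint4 k)).add (hint4 l)).add (integrable_const 1)).div_const
      4).mono'
      (((measurable_pi_apply m).comp ((WithLp.measurable_ofLp _ _).comp (hmeas j))).mul
        ((hmeas k).inner (hmeas l))).aestronglyMeasurable (ae_of_all _ fun ω => ?_)
    calc ‖r j ω m * (inner ℝ (r k ω) (r l ω) : ℝ)‖
        = |r j ω m| * |(inner ℝ (r k ω) (r l ω) : ℝ)| := by rw [Real.norm_eq_abs, abs_mul]
      _ ≤ ‖r j ω‖ * (‖r k ω‖ * ‖r l ω‖) :=
          mul_le_mul (vr_coord_le _ _) (abs_real_inner_le_norm _ _) (abs_nonneg _)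
            (norm_nonneg _)
      _ = ‖r j ω‖ * ‖r k ω‖ * ‖r l ω‖ * 1 := by ring
      _ ≤ (‖r j ω‖^4 + ‖r k ω‖^4 + ‖r l ω‖^4 + 1^4)/4 :=
          vr_amgm4 _ _ _ _ (norm_nonneg _) (norm_nonneg _) (norm_nonneg _) zero_le_one
      _ = (‖r j ω‖^4 + ‖r k ω‖^4 + ‖r l ω‖^4 + 1)/4 := by norm_num
  have hprod := hXY.integral_mul_eq_mul_integral hX.aestronglyMeasurable hY.aestronglyMeasurable
  rw [show ((fun ω => r i ω m) * fun ω => r j ω m * (inner ℝ (r k ω) (r l ω) : ℝ))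
    = fun ω => r i ω m * (r j ω m * (inner ℝ (r k ω) (r l ω) : ℝ)) from rfl] at hprod
  rw [hprod, vr_coord_integral_zero hint1 hmean i m, zero_mul]

lemma vr_int_sq (hmeas : ∀ n, Measurable (r n))
    (hint4 : ∀ n, Integrable (fun ω => ‖r n ω‖ ^ 4) P) (n : Fin N) :
    Integrable (fun ω => ‖r n ω‖ ^ 2) P := by
  have hb : Integrable (fun ω => 1 + ‖r n ω‖ ^ 4) P := by
    exact (integrable_const 1).add (hint4 n)
  refine hb.mono' ((hmeas n).norm.pow_const 2).aestronglyMeasurable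
    (ae_of_all _ fun ω => ?_)
  rw [Real.norm_eq_abs, abs_of_nonneg (by positivity)]
  nlinarith [sq_nonneg (‖r n ω‖^2 - 1), sq_nonneg (‖r n ω‖)]

lemma vr_mean_sq_le {σ : ℝ} (hσ : 0 < σ) (hmeas : ∀ n, Measurable (r n))
    (hint4 : ∀ n, Integrable (fun ω => ‖r n ω‖ ^ 4) P)
    (hmom4 : ∀ n, ∫ ω, ‖r n ω‖ ^ 4 ∂P ≤ σ ^ 4) (n : Fin N) :
    ∫ ω, ‖r n ω‖ ^ 2 ∂P ≤ σ ^ 2 := by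
  set c : ℝ := ∫ ω, ‖r n ω‖ ^ 2 ∂P with hc
  have hc0 : 0 ≤ c := integral_nonneg fun ω => by positivity
  have hf : Integrable (fun ω => ‖r n ω‖ ^ 2) P := vr_int_sq hmeas hint4 n
  have hf2 : Integrable (fun ω => (‖r n ω‖ ^ 2) ^ 2) P := by
    have : (fun ω => (‖r n ω‖ ^ 2) ^ 2) = fun ω => ‖r n ω‖ ^ 4 := by
      funext ω; ring
    rw [this]; exact hint4 n
  have hvar : 0 ≤ ∫ ω, (‖r n ω‖ ^ 2 - c) ^ 2 ∂P := integral_nonneg fun ω => sq_nonneg _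
  have hexp : ∫ ω, (‖r n ω‖ ^ 2 - c) ^ 2 ∂P
      = (∫ ω, (‖r n ω‖ ^ 2) ^ 2 ∂P) - c ^ 2 := by
    have hrw : ∀ ω : Ω, (‖r n ω‖ ^ 2 - c) ^ 2
        = (‖r n ω‖ ^ 2) ^ 2 - (2 * c) * ‖r n ω‖ ^ 2 + c ^ 2 := fun ω => by ring
    simp_rw [hrw]
    have hsub : Integrable (fun ω => (‖r n ω‖ ^ 2) ^ 2 - 2 * c * ‖r n ω‖ ^ 2) P := by
      exact hf2.sub (hf.const_mul (2*c))
    have hcm : Integrable (fun ω => 2 * c * ‖r n ω‖ ^ 2) P := by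
      exact hf.const_mul (2*c)
    rw [integral_add hsub (integrable_const _), integral_sub hf2 hcm,
      integral_const_mul, integral_const]
    simp only [measure_univ, probReal_univ, ENNReal.toReal_one, smul_eq_mul, one_mul, ← hc]
    ring
  have hle : c ^ 2 ≤ σ ^ 4 := by
    have h4 : ∫ ω, (‖r n ω‖ ^ 2) ^ 2 ∂P ≤ σ ^ 4 := by
      have : (fun ω => (‖r n ω‖ ^ 2) ^ 2) = fun ω => ‖r n ω‖ ^ 4 := by funext ω; ring
      rw [this]; exact hmom4 n
    rw [hexp] at hvar; linarith
  nlinarith [hle, hc0, pow_pos hσ 2]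

lemma vr_prod_int (hmeas : ∀ n, Measurable (r n))
    (hindep : iIndepFun r P)
    (hint4 : ∀ n, Integrable (fun ω => ‖r n ω‖ ^ 4) P)
    (i k : Fin N) (hik : i ≠ k) :
    ∫ ω, ‖r i ω‖ ^ 2 * ‖r k ω‖ ^ 2 ∂P
      = (∫ ω, ‖r i ω‖ ^ 2 ∂P) * ∫ ω, ‖r k ω‖ ^ 2 ∂P := by
  have hind : IndepFun (fun ω => ‖r i ω‖ ^ 2) (fun ω => ‖r k ω‖ ^ 2) P :=
    (hindep.indepFun hik).comp (measurable_norm.pow_const 2) (measurable_norm.pow_const 2)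
  have h := hind.integral_mul_eq_mul_integral (vr_int_sq hmeas hint4 i).aestronglyMeasurable (vr_int_sq hmeas hint4 k).aestronglyMeasurable
  rw [show ((fun ω => ‖r i ω‖ ^ 2) * fun ω => ‖r k ω‖ ^ 2)
    = fun ω => ‖r i ω‖ ^ 2 * ‖r k ω‖ ^ 2 from rfl] at h
  exact h

lemma vr_B1 {σ : ℝ} (hmom4 : ∀ n, ∫ ω, ‖r n ω‖ ^ 4 ∂P ≤ σ ^ 4) (i : Fin N) :
    ∫ ω, (inner ℝ (r i ω) (r i ω) : ℝ) * inner ℝ (r i ω) (r i ω) ∂P ≤ σ ^ 4 := by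
  have hrw : ∀ ω : Ω, (inner ℝ (r i ω) (r i ω) : ℝ) * inner ℝ (r i ω) (r i ω) = ‖r i ω‖ ^ 4 := by
    intro ω; rw [real_inner_self_eq_norm_sq]; ring
  simp_rw [hrw]; exact hmom4 i

lemma vr_B2 {σ : ℝ} (hσ : 0 < σ) (hmeas : ∀ n, Measurable (r n))
    (hindep : iIndepFun r P)
    (hint4 : ∀ n, Integrable (fun ω => ‖r n ω‖ ^ 4) P)
    (hmom4 : ∀ n, ∫ ω, ‖r n ω‖ ^ 4 ∂P ≤ σ ^ 4)
    (i k : Fin N) (hik : i ≠ k) :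
    ∫ ω, (inner ℝ (r i ω) (r i ω) : ℝ) * inner ℝ (r k ω) (r k ω) ∂P ≤ σ ^ 4 := by
  have hrw : ∀ ω : Ω, (inner ℝ (r i ω) (r i ω) : ℝ) * inner ℝ (r k ω) (r k ω)
      = ‖r i ω‖ ^ 2 * ‖r k ω‖ ^ 2 := by
    intro ω; rw [real_inner_self_eq_norm_sq, real_inner_self_eq_norm_sq]
  simp_rw [hrw]
  rw [vr_prod_int hmeas hindep hint4 i k hik]
  have h1 := vr_mean_sq_le hσ hmeas hint4 hmom4 i
  have h2 := vr_mean_sq_le hσ hmeas hint4 hmom4 k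
  have h10 : 0 ≤ ∫ ω, ‖r i ω‖ ^ 2 ∂P := integral_nonneg fun ω => by positivity
  have h20 : 0 ≤ ∫ ω, ‖r k ω‖ ^ 2 ∂P := integral_nonneg fun ω => by positivity
  calc (∫ ω, ‖r i ω‖ ^ 2 ∂P) * ∫ ω, ‖r k ω‖ ^ 2 ∂P ≤ σ ^ 2 * σ ^ 2 :=
        mul_le_mul h1 h2 h20 (by positivity)
    _ = σ ^ 4 := by ring

lemma vr_B3 {σ : ℝ} (hσ : 0 < σ) (hmeas : ∀ n, Measurable (r n))
    (hindep : iIndepFun r P)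
    (hint4 : ∀ n, Integrable (fun ω => ‖r n ω‖ ^ 4) P)
    (hmom4 : ∀ n, ∫ ω, ‖r n ω‖ ^ 4 ∂P ≤ σ ^ 4)
    (i j : Fin N) (hij : i ≠ j) :
    ∫ ω, (inner ℝ (r i ω) (r j ω) : ℝ) * inner ℝ (r i ω) (r j ω) ∂P ≤ σ ^ 4 := by
  have hind : IndepFun (fun ω => ‖r i ω‖ ^ 2) (fun ω => ‖r j ω‖ ^ 2) P :=
    (hindep.indepFun hij).comp (measurable_norm.pow_const 2) (measurable_norm.pow_const 2)
  have hintp : Integrable (fun ω => ‖r i ω‖ ^ 2 * ‖r j ω‖ ^ 2) P := by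
    have := hind.integrable_mul (vr_int_sq hmeas hint4 i) (vr_int_sq hmeas hint4 j)
    exact this
  have hple : ∀ ω : Ω, (inner ℝ (r i ω) (r j ω) : ℝ) * inner ℝ (r i ω) (r j ω)
      ≤ ‖r i ω‖ ^ 2 * ‖r j ω‖ ^ 2 := by
    intro ω
    have h := real_inner_mul_inner_self_le (r i ω) (r j ω)
    rwa [real_inner_self_eq_norm_sq, real_inner_self_eq_norm_sq] at h
  calc ∫ ω, (inner ℝ (r i ω) (r j ω) : ℝ) * inner ℝ (r i ω) (r j ω) ∂P
      ≤ ∫ ω, ‖r i ω‖ ^ 2 * ‖r j ω‖ ^ 2 ∂P :=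
        integral_mono (vr_integrable_T hmeas hint4 i j i j) hintp hple
    _ = (∫ ω, ‖r i ω‖ ^ 2 ∂P) * ∫ ω, ‖r j ω‖ ^ 2 ∂P :=
        vr_prod_int hmeas hindep hint4 i j hij
    _ ≤ σ ^ 2 * σ ^ 2 :=
        mul_le_mul (vr_mean_sq_le hσ hmeas hint4 hmom4 i)
          (vr_mean_sq_le hσ hmeas hint4 hmom4 j)
          (integral_nonneg fun ω => by positivity) (by positivity)
    _ = σ ^ 4 := by ring

lemma vr_term_bound {σ : ℝ} (hσ : 0 < σ) (hmeas : ∀ n, Measurable (r n))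
    (hindep : iIndepFun r P)
    (hint1 : ∀ n, Integrable (r n) P)
    (hint4 : ∀ n, Integrable (fun ω => ‖r n ω‖ ^ 4) P)
    (hmean : ∀ n, ∫ ω, r n ω ∂P = 0)
    (hmom4 : ∀ n, ∫ ω, ‖r n ω‖ ^ 4 ∂P ≤ σ ^ 4)
    (i j k l : Fin N) :
    ∫ ω, (inner ℝ (r i ω) (r j ω) : ℝ) * inner ℝ (r k ω) (r l ω) ∂P
      ≤ σ ^ 4 * ((if i = j then (1:ℝ) else 0) * (if k = l then (1:ℝ) else 0)
        + (if i = k then (1:ℝ) else 0) * (if j = l then (1:ℝ) else 0)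
        + (if i = l then (1:ℝ) else 0) * (if j = k then (1:ℝ) else 0)) := by
  classical
  have hσ4 : (0:ℝ) ≤ σ ^ 4 := by positivity
  by_cases h1 : i = j ∧ k = l
  · obtain ⟨rfl, rfl⟩ := h1
    by_cases hik : i = k
    · subst hik
      simp only [eq_self_iff_true, if_true, mul_one]
      have := vr_B1 hmom4 i
      linarith
    · have := vr_B2 hσ hmeas hindep hint4 hmom4 i k hik
      simp only [eq_self_iff_true, if_true, if_neg hik, mul_one, mul_zero, zero_mul,
        add_zero]
      linarith [this]
  · by_cases h2 : i = k ∧ j = l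
    · obtain ⟨rfl, rfl⟩ := h2
      have hij : i ≠ j := fun h => h1 ⟨h, h⟩
      have := vr_B3 hσ hmeas hindep hint4 hmom4 i j hij
      have hjne : j ≠ i := fun h => hij h.symm
      simp only [eq_self_iff_true, if_true, if_neg hij, if_neg hjne, mul_one, mul_zero,
        zero_mul, zero_add, add_zero]
      linarith [this]
    · by_cases h3 : i = l ∧ j = k
      · obtain ⟨rfl, rfl⟩ := h3
        have hij : i ≠ j := fun h => h1 ⟨h, h.symm⟩
        have hrw : ∀ ω : Ω, (inner ℝ (r i ω) (r j ω) : ℝ) * inner ℝ (r j ω) (r i ω)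
            = (inner ℝ (r i ω) (r j ω) : ℝ) * inner ℝ (r i ω) (r j ω) := by
          intro ω; rw [real_inner_comm (r j ω)]
        simp_rw [hrw]
        have := vr_B3 hσ hmeas hindep hint4 hmom4 i j hij
        have hjne : j ≠ i := fun h => hij h.symm
        simp only [eq_self_iff_true, if_true, if_neg hij, if_neg hjne, mul_one, mul_zero,
          zero_mul, zero_add, add_zero]
        linarith [this]
      · have hrhs : (0:ℝ) ≤ σ ^ 4 * ((if i = j then (1:ℝ) else 0) * (if k = l then (1:ℝ) else 0)
            + (if i = k then (1:ℝ) else 0) * (if j = l then (1:ℝ) else 0)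
            + (if i = l then (1:ℝ) else 0) * (if j = k then (1:ℝ) else 0)) := by
          have e : ∀ (p : Prop) [Decidable p], (0:ℝ) ≤ if p then (1:ℝ) else 0 := by
            intro p _; split <;> norm_num
          exact mul_nonneg hσ4 (by
            refine add_nonneg (add_nonneg (mul_nonneg (e _) (e _)) (mul_nonneg (e _) (e _)))
              (mul_nonneg (e _) (e _)))
        rcases vr_lone i j k l h1 h2 h3 with ⟨a, b, c⟩ | ⟨a, b, c⟩ | ⟨a, b, c⟩ | ⟨a, b, c⟩
        · rw [vr_vanish hmeas hindep hint1 hint4 hmean i j k l a b c]; exact hrhs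
        · have hrw : ∀ ω : Ω, (inner ℝ (r i ω) (r j ω) : ℝ) * inner ℝ (r k ω) (r l ω)
              = (inner ℝ (r j ω) (r i ω) : ℝ) * inner ℝ (r k ω) (r l ω) := by
            intro ω; rw [real_inner_comm]
          simp_rw [hrw]
          rw [vr_vanish hmeas hindep hint1 hint4 hmean j i k l a b c]; exact hrhs
        · have hrw : ∀ ω : Ω, (inner ℝ (r i ω) (r j ω) : ℝ) * inner ℝ (r k ω) (r l ω)
              = (inner ℝ (r k ω) (r l ω) : ℝ) * inner ℝ (r i ω) (r j ω) := by
            intro ω; rw [mul_comm]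
          simp_rw [hrw]
          rw [vr_vanish hmeas hindep hint1 hint4 hmean k l i j c a b]; exact hrhs
        · have hrw : ∀ ω : Ω, (inner ℝ (r i ω) (r j ω) : ℝ) * inner ℝ (r k ω) (r l ω)
              = (inner ℝ (r l ω) (r k ω) : ℝ) * inner ℝ (r i ω) (r j ω) := by
            intro ω; rw [mul_comm, real_inner_comm]
          simp_rw [hrw]
          rw [vr_vanish hmeas hindep hint1 hint4 hmean l k i j c a b]; exact hrhs

end aux

/-- **Fourth-order variance reduction for mini-batch averages (Appendix A.4 of Dif-MAML).**
For i.i.d. zero-mean random vectors `r_1, …, r_N` with `E‖r_n‖⁴ ≤ σ⁴`,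
the mini-batch average satisfies `E‖(1/N) Σ r_n‖⁴ ≤ 3σ⁴/N²`. -/
theorem fourth_moment_variance_reduction
    (M N : ℕ) (σ : ℝ) (hN : 1 ≤ N) (hσ : 0 < σ)
    {Ω : Type*} [MeasurableSpace Ω] (P : Measure Ω) [IsProbabilityMeasure P]
    (r : Fin N → Ω → EuclideanSpace ℝ (Fin M))
    (hmeas : ∀ n, Measurable (r n))
    (hindep : iIndepFun r P)
    (hident : ∀ n m, IdentDistrib (r n) (r m) P P)
    (hint1 : ∀ n, Integrable (r n) P)
    (hint4 : ∀ n, Integrable (fun ω => ‖r n ω‖ ^ 4) P)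
    (hmean : ∀ n, ∫ ω, r n ω ∂P = 0)
    (hmom4 : ∀ n, ∫ ω, ‖r n ω‖ ^ 4 ∂P ≤ σ ^ 4)
    (havg_int : Integrable (fun ω => ‖(N : ℝ)⁻¹ • ∑ n, r n ω‖ ^ 4) P) :
    ∫ ω, ‖(N : ℝ)⁻¹ • ∑ n, r n ω‖ ^ 4 ∂P ≤ 3 * σ ^ 4 / (N : ℝ) ^ 2 := by
  classical
  have hN0 : (0:ℝ) < (N:ℝ) := by exact_mod_cast hN
  have hnorm : ∀ ω : Ω, ‖(N : ℝ)⁻¹ • ∑ n, r n ω‖ ^ 4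
      = ((N:ℝ)⁻¹)^4 * ‖∑ n, r n ω‖^4 := by
    intro ω
    rw [norm_smul, mul_pow, Real.norm_eq_abs, abs_inv, Nat.abs_cast]
  have hexpand : ∀ ω : Ω, ‖∑ n, r n ω‖ ^ 4
      = ∑ i : Fin N, ∑ j : Fin N, ∑ k : Fin N, ∑ l : Fin N,
          (inner ℝ (r i ω) (r j ω) : ℝ) * inner ℝ (r k ω) (r l ω) := by
    intro ω
    have h2 : ‖∑ n, r n ω‖ ^ 2
        = ∑ i : Fin N, ∑ j : Fin N, (inner ℝ (r i ω) (r j ω) : ℝ) := by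
      rw [← real_inner_self_eq_norm_sq, sum_inner]
      exact Finset.sum_congr rfl fun i _ => inner_sum _ _ _
    calc ‖∑ n, r n ω‖ ^ 4 = (‖∑ n, r n ω‖^2) * (‖∑ n, r n ω‖^2) := by ring
      _ = (∑ i : Fin N, ∑ j : Fin N, (inner ℝ (r i ω) (r j ω) : ℝ))
          * (∑ k : Fin N, ∑ l : Fin N, (inner ℝ (r k ω) (r l ω) : ℝ)) := by rw [h2]
      _ = _ := by simp_rw [Finset.sum_mul, Finset.mul_sum]
  simp_rw [hnorm, hexpand]
  rw [integral_const_mul]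
  have hintT : ∀ i j k l : Fin N, Integrable
      (fun ω => (inner ℝ (r i ω) (r j ω) : ℝ) * inner ℝ (r k ω) (r l ω)) P :=
    vr_integrable_T hmeas hint4
  have I3 : ∀ i j k : Fin N, Integrable (fun ω => ∑ l : Fin N,
      (inner ℝ (r i ω) (r j ω) : ℝ) * inner ℝ (r k ω) (r l ω)) P :=
    fun i j k => integrable_finset_sum _ fun l _ => hintT i j k l
  have I2 : ∀ i j : Fin N, Integrable (fun ω => ∑ k : Fin N, ∑ l : Fin N,
      (inner ℝ (r i ω) (r j ω) : ℝ) * inner ℝ (r k ω) (r l ω)) P :=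
    fun i j => integrable_finset_sum _ fun k _ => I3 i j k
  have I1 : ∀ i : Fin N, Integrable (fun ω => ∑ j : Fin N, ∑ k : Fin N, ∑ l : Fin N,
      (inner ℝ (r i ω) (r j ω) : ℝ) * inner ℝ (r k ω) (r l ω)) P :=
    fun i => integrable_finset_sum _ fun j _ => I2 i j
  have hswap : (∫ ω, ∑ i : Fin N, ∑ j : Fin N, ∑ k : Fin N, ∑ l : Fin N,
        (inner ℝ (r i ω) (r j ω) : ℝ) * inner ℝ (r k ω) (r l ω) ∂P)
      = ∑ i : Fin N, ∑ j : Fin N, ∑ k : Fin N, ∑ l : Fin N,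
        ∫ ω, (inner ℝ (r i ω) (r j ω) : ℝ) * inner ℝ (r k ω) (r l ω) ∂P := by
    rw [integral_finset_sum _ fun i _ => I1 i]
    refine Finset.sum_congr rfl fun i _ => ?_
    rw [integral_finset_sum _ fun j _ => I2 i j]
    refine Finset.sum_congr rfl fun j _ => ?_
    rw [integral_finset_sum _ fun k _ => I3 i j k]
    refine Finset.sum_congr rfl fun k _ => ?_
    rw [integral_finset_sum _ fun l _ => hintT i j k l]
  rw [hswap]
  have hbound : (∑ i : Fin N, ∑ j : Fin N, ∑ k : Fin N, ∑ l : Fin N,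
        ∫ ω, (inner ℝ (r i ω) (r j ω) : ℝ) * inner ℝ (r k ω) (r l ω) ∂P)
      ≤ ∑ i : Fin N, ∑ j : Fin N, ∑ k : Fin N, ∑ l : Fin N,
        σ ^ 4 * ((if i = j then (1:ℝ) else 0) * (if k = l then (1:ℝ) else 0)
          + (if i = k then (1:ℝ) else 0) * (if j = l then (1:ℝ) else 0)
          + (if i = l then (1:ℝ) else 0) * (if j = k then (1:ℝ) else 0)) :=
    Finset.sum_le_sum fun i _ => Finset.sum_le_sum fun j _ => Finset.sum_le_sum fun k _ =>
      Finset.sum_le_sum fun l _ =>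
        vr_term_bound hσ hmeas hindep hint1 hint4 hmean hmom4 i j k l
  have hsum : (∑ i : Fin N, ∑ j : Fin N, ∑ k : Fin N, ∑ l : Fin N,
        σ ^ 4 * ((if i = j then (1:ℝ) else 0) * (if k = l then (1:ℝ) else 0)
          + (if i = k then (1:ℝ) else 0) * (if j = l then (1:ℝ) else 0)
          + (if i = l then (1:ℝ) else 0) * (if j = k then (1:ℝ) else 0)))
      = 3 * (N:ℝ)^2 * σ ^ 4 := by
    simp [mul_add, Finset.sum_add_distrib, Finset.mul_sum, mul_ite, ite_mul, mul_zero,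
      zero_mul, mul_one, Finset.sum_ite_eq, Finset.sum_ite_eq', Finset.sum_const,
      Finset.card_univ]
    ring
  calc ((N:ℝ)⁻¹)^4 * (∑ i : Fin N, ∑ j : Fin N, ∑ k : Fin N, ∑ l : Fin N,
        ∫ ω, (inner ℝ (r i ω) (r j ω) : ℝ) * inner ℝ (r k ω) (r l ω) ∂P)
      ≤ ((N:ℝ)⁻¹)^4 * (3 * (N:ℝ)^2 * σ ^ 4) :=
        mul_le_mul_of_nonneg_left (hbound.trans_eq hsum) (by positivity)
    _ = 3 * σ ^ 4 / (N : ℝ) ^ 2 := by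
        field_simp
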